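/- Let n ≥ 1 and let A and B be n×n complex Hermitian matrices. Then for every integer k with 1 ≤ k ≤ n, the sum of the k largest eigenvalues satisfies ∑_{j=n−k+1}^{n} λ_j(A+B) ≤ ∑_{j=n−k+1}^{n} (λ_j(A) + λ_j(B)). -/

import Mathlib

open Matrix Finset

/-- The eigenvalues of a Hermitian matrix, listed with multiplicity in
nondecreasing order: `sortedEigenvalues hA 0 ≤ ⋯ ≤ sortedEigenvalues hA (n-1)`. -/
noncomputable def sortedEigenvalues {n : ℕ} {A : Matrix (Fin n) (Fin n) ℂ}
    (hA : A.IsHermitian) : Fin n → ℝ :=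
  hA.eigenvalues ∘ Tuple.sort hA.eigenvalues

lemma card_topk {n k : ℕ} (hk2 : k ≤ n) :
    (Finset.univ.filter (fun j : Fin n => n - k ≤ (j : ℕ))).card = k := by
  have h : (Finset.univ.filter (fun j : Fin n => n - k ≤ (j : ℕ))).card
      = (Finset.Ico (n - k) n).card := by
    refine Finset.card_nbij (fun j => (j : ℕ)) ?_ ?_ ?_
    · intro a ha
      simp only [Finset.coe_filter, Finset.mem_coe, Finset.mem_filter, Finset.mem_univ, true_and, Set.mem_setOf_eq] at ha
      simp [Finset.mem_Ico, ha, a.isLt]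
    · exact Fin.val_injective.injOn
    · intro b hb
      simp only [Finset.coe_Ico, Set.mem_Ico] at hb
      exact ⟨⟨b, hb.2⟩, by simp; omega, rfl⟩
  rw [h, Nat.card_Ico]
  omega

lemma re_conj_mul (z : ℂ) (c : ℝ) :
    ((starRingEnd ℂ) z * (c : ℂ) * z).re = c * Complex.normSq z := by
  simp [Complex.mul_re, Complex.mul_im, Complex.normSq_apply]
  ring

lemma normSq_eq_re_star_mul (z : ℂ) : Complex.normSq z = (star z * z).re := by
  rw [Complex.star_def, mul_comm, Complex.mul_conj, Complex.ofReal_re]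

lemma normSq_eq_re_mul_star (z : ℂ) : Complex.normSq z = (z * star z).re := by
  rw [Complex.star_def, Complex.mul_conj, Complex.ofReal_re]

lemma comb_lemma {n k : ℕ} (hk1 : 1 ≤ k) (hk2 : k ≤ n) (μ d : Fin n → ℝ)
    (hμ : Monotone μ) (hd0 : ∀ p, 0 ≤ d p) (hd1 : ∀ p, d p ≤ 1)
    (hsum : ∑ p, d p = (k : ℝ)) :
    ∑ p, d p * μ p ≤ ∑ p ∈ Finset.univ.filter (fun p : Fin n => n - k ≤ (p : ℕ)), μ p := by
  set S := Finset.univ.filter (fun p : Fin n => n - k ≤ (p : ℕ)) with hS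
  have hnk : n - k < n := by omega
  set t := μ ⟨n - k, hnk⟩ with ht
  have hcard : (S.card : ℝ) = (k : ℝ) := by exact_mod_cast card_topk hk2
  have h1 : ∀ p ∈ S, d p * μ p ≤ μ p - (1 - d p) * t := by
    intro p hp
    have hpk : n - k ≤ (p : ℕ) := by simpa [hS] using hp
    have htp : t ≤ μ p := hμ (show (⟨n - k, hnk⟩ : Fin n) ≤ p from hpk)
    nlinarith [hd1 p, hd0 p]
  have h2 : ∀ p ∈ Sᶜ, d p * μ p ≤ d p * t := by
    intro p hp
    have hpk : (p : ℕ) < n - k := by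
      simp only [hS, Finset.mem_compl, Finset.mem_filter, Finset.mem_univ, true_and,
        not_le] at hp
      exact hp
    have htp : μ p ≤ t := hμ (le_of_lt (show p < (⟨n - k, hnk⟩ : Fin n) from hpk))
    nlinarith [hd0 p]
  have key : ∑ p ∈ S, (μ p - (1 - d p) * t) + ∑ p ∈ Sᶜ, d p * t
      = ∑ p ∈ S, μ p + t * ((∑ p ∈ S, d p + ∑ p ∈ Sᶜ, d p) - S.card) := by
    rw [Finset.sum_sub_distrib]
    simp only [sub_mul, one_mul]
    rw [Finset.sum_sub_distrib, Finset.sum_const, nsmul_eq_mul]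
    rw [← Finset.sum_mul, ← Finset.sum_mul]
    ring
  calc ∑ p, d p * μ p
      = ∑ p ∈ S, d p * μ p + ∑ p ∈ Sᶜ, d p * μ p := (Finset.sum_add_sum_compl S _).symm
    _ ≤ ∑ p ∈ S, (μ p - (1 - d p) * t) + ∑ p ∈ Sᶜ, d p * t :=
        add_le_add (Finset.sum_le_sum h1) (Finset.sum_le_sum h2)
    _ = ∑ p ∈ S, μ p + t * ((∑ p ∈ S, d p + ∑ p ∈ Sᶜ, d p) - S.card) := key
    _ = ∑ p ∈ S, μ p := by
        rw [Finset.sum_add_sum_compl, hsum, hcard]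
        ring

lemma keyFan {n k : ℕ} (hk1 : 1 ≤ k) (hk2 : k ≤ n)
    {A : Matrix (Fin n) (Fin n) ℂ} (hA : A.IsHermitian)
    (V : Matrix (Fin n) (Fin n) ℂ) (hV : V ∈ Matrix.unitaryGroup (Fin n) ℂ)
    (T : Finset (Fin n)) (hT : T.card = k) :
    ∑ i ∈ T, ((star V * A * V) i i).re ≤
      ∑ j ∈ Finset.univ.filter (fun j : Fin n => n - k ≤ (j : ℕ)), sortedEigenvalues hA j := by
  set U := (hA.eigenvectorUnitary : Matrix (Fin n) (Fin n) ℂ) with hU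
  set W := star U * V with hW
  have hUmem : U ∈ Matrix.unitaryGroup (Fin n) ℂ := hA.eigenvectorUnitary.2
  have hWmem : W ∈ Matrix.unitaryGroup (Fin n) ℂ := mul_mem (Unitary.star_mem hUmem) hV
  have hW1 : star W * W = 1 := (Matrix.mem_unitaryGroup_iff').mp hWmem
  have hW2 : W * star W = 1 := (Matrix.mem_unitaryGroup_iff).mp hWmem
  set lam := hA.eigenvalues with hlam
  have hM : star V * A * V = star W * Matrix.diagonal (RCLike.ofReal ∘ lam) * W := by
    rw [hW, StarMul.star_mul, star_star]
    conv_lhs => rw [hA.spectral_theorem, Unitary.conjStarAlgAut_apply]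
    rw [← hU, ← hlam]
    noncomm_ring
  have hentry : ∀ i, ((star V * A * V) i i).re = ∑ m, lam m * Complex.normSq (W m i) := by
    intro i
    rw [hM, Matrix.mul_apply, Complex.re_sum]
    apply Finset.sum_congr rfl
    intro m _
    rw [Matrix.mul_diagonal, Matrix.star_apply]
    exact re_conj_mul (W m i) (lam m)
  -- row sums and column sums of |W|^2
  have hrow : ∀ m, ∑ i, Complex.normSq (W m i) = 1 := by
    intro m
    have h := congrArg (fun M => (M m m).re) hW2
    simp only [Matrix.mul_apply, Matrix.one_apply_eq, Complex.one_re, Complex.re_sum,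
      Matrix.star_apply] at h
    rw [← h]
    apply Finset.sum_congr rfl
    intro i _
    exact normSq_eq_re_mul_star (W m i)
  have hcol : ∀ i, ∑ m, Complex.normSq (W m i) = 1 := by
    intro i
    have h := congrArg (fun M => (M i i).re) hW1
    simp only [Matrix.mul_apply, Matrix.one_apply_eq, Complex.one_re, Complex.re_sum,
      Matrix.star_apply] at h
    rw [← h]
    apply Finset.sum_congr rfl
    intro m _
    exact normSq_eq_re_star_mul (W m i)
  set c : Fin n → ℝ := fun m => ∑ i ∈ T, Complex.normSq (W m i) with hc
  have hLHS : ∑ i ∈ T, ((star V * A * V) i i).re = ∑ m, c m * lam m := by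
    simp_rw [hentry]
    rw [Finset.sum_comm]
    apply Finset.sum_congr rfl
    intro m _
    rw [hc, Finset.sum_mul]
    simp_rw [mul_comm]
  rw [hLHS]
  set σ := Tuple.sort lam with hσ
  have hperm : ∑ m, c m * lam m = ∑ p, c (σ p) * lam (σ p) :=
    (Equiv.sum_comp σ (fun m => c m * lam m)).symm
  rw [hperm]
  have := comb_lemma hk1 hk2 (lam ∘ σ) (c ∘ σ) (Tuple.monotone_sort lam)
    (fun p => Finset.sum_nonneg fun i _ => Complex.normSq_nonneg _)
    (fun p => by
      rw [hc]
      calc ∑ i ∈ T, Complex.normSq (W (σ p) i)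
          ≤ ∑ i, Complex.normSq (W (σ p) i) :=
            Finset.sum_le_sum_of_subset_of_nonneg (Finset.subset_univ T)
              (fun i _ _ => Complex.normSq_nonneg _)
        _ = 1 := hrow (σ p))
    (by
      simp only [Function.comp_apply]
      rw [Equiv.sum_comp σ c]
      simp only [hc]
      rw [Finset.sum_comm]
      simp_rw [hcol]
      simp [hT])
  exact this

/-- For Hermitian matrices `A`, `B`, the sum of the `k` largest eigenvalues of `A + B`
is at most the sum of the `k` largest eigenvalues of `A` plus that of `B`. -/
theorem sum_largest_eigenvalues_add_le {n : ℕ} (hn : 1 ≤ n)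
    (A B : Matrix (Fin n) (Fin n) ℂ) (hA : A.IsHermitian) (hB : B.IsHermitian)
    (k : ℕ) (hk1 : 1 ≤ k) (hk2 : k ≤ n) :
    ∑ j ∈ Finset.univ.filter (fun j : Fin n => n - k ≤ (j : ℕ)),
        sortedEigenvalues (hA.add hB) j ≤
      ∑ j ∈ Finset.univ.filter (fun j : Fin n => n - k ≤ (j : ℕ)),
        (sortedEigenvalues hA j + sortedEigenvalues hB j) := by
  set hC := hA.add hB with hhC
  set F := Finset.univ.filter (fun j : Fin n => n - k ≤ (j : ℕ)) with hF
  set U := (hC.eigenvectorUnitary : Matrix (Fin n) (Fin n) ℂ) with hU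
  have hUmem : U ∈ Matrix.unitaryGroup (Fin n) ℂ := hC.eigenvectorUnitary.2
  set σ := Tuple.sort hC.eigenvalues with hσ
  set T := F.image σ with hT
  have hTcard : T.card = k := by
    rw [hT, Finset.card_image_of_injective _ σ.injective, hF, card_topk hk2]
  -- LHS equals trace over T
  have hdiag : star U * (A + B) * U = Matrix.diagonal (RCLike.ofReal ∘ hC.eigenvalues) :=
    (Unitary.conjStarAlgAut_star_apply _ _).symm.trans hC.conjStarAlgAut_star_eigenvectorUnitary
  have hL : ∑ j ∈ F, sortedEigenvalues hC j = ∑ i ∈ T, ((star U * (A + B) * U) i i).re := by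
    rw [hT, Finset.sum_image (fun a _ b _ h => σ.injective h)]
    apply Finset.sum_congr rfl
    intro j _
    rw [hdiag]
    simp [sortedEigenvalues, Matrix.diagonal_apply_eq]
    rfl
  have hsplit : ∀ i, ((star U * (A + B) * U) i i).re
      = ((star U * A * U) i i).re + ((star U * B * U) i i).re := by
    intro i
    have : star U * (A + B) * U = star U * A * U + star U * B * U := by
      noncomm_ring
    rw [this]
    simp [Matrix.add_apply]
  calc ∑ j ∈ F, sortedEigenvalues hC j
      = ∑ i ∈ T, ((star U * (A + B) * U) i i).re := hL
    _ = ∑ i ∈ T, ((star U * A * U) i i).re + ∑ i ∈ T, ((star U * B * U) i i).re := by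
        simp_rw [hsplit]; rw [Finset.sum_add_distrib]
    _ ≤ (∑ j ∈ F, sortedEigenvalues hA j) + ∑ j ∈ F, sortedEigenvalues hB j :=
        add_le_add (keyFan hk1 hk2 hA U hUmem T hTcard) (keyFan hk1 hk2 hB U hUmem T hTcard)
    _ = ∑ j ∈ F, (sortedEigenvalues hA j + sortedEigenvalues hB j) :=
        (Finset.sum_add_distrib).symm
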